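/- Let Λ = Aℤ² be a lattice in ℤ × ℝ with generator matrix A = [[a,b],[c,d]], where a,b ∈ ℤ, c,d ∈ ℚ, and det(A) = 1/2. Write c = p/q and d = p'/q' with gcd(p,q) = gcd(p',q') = 1, p,q,p',q' ∈ ℤ. Set N = qq'/gcd(pq', p'q). Then N/2 ∈ ℤ and Λ possesses a uniquely determined generator matrix of the form A' = [[N/2, b'],[0, 1/N]] with b' ∈ ℤ and 0 ≤ b' < N/2; that is, there is exactly one such b' with A'ℤ² = Λ. -/

import Mathlib

/-- The lattice `A ℤ²` generated by a real `2 × 2` matrix `A`. -/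
def latticePts (A : Matrix (Fin 2) (Fin 2) ℝ) : Set (Fin 2 → ℝ) :=
  {x | ∃ m n : ℤ, x = A.mulVec ![(m : ℝ), (n : ℝ)]}

lemma mulVec2 (α β γ δ m n : ℝ) :
    (!![α, β; γ, δ]).mulVec ![m, n] = ![α*m + β*n, γ*m + δ*n] := by
  funext i
  fin_cases i <;> simp [Matrix.mulVec, dotProduct, Fin.sum_univ_two]

lemma mem2 (α β γ δ : ℝ) (x : Fin 2 → ℝ) :
    x ∈ latticePts !![α,β;γ,δ] ↔ ∃ m n : ℤ, x 0 = α*m + β*n ∧ x 1 = γ*m + δ*n := by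
  unfold latticePts
  constructor
  · rintro ⟨m, n, rfl⟩
    exact ⟨m, n, by simp [mulVec2]; ring, by simp [mulVec2]; ring⟩
  · rintro ⟨m, n, h0, h1⟩
    refine ⟨m, n, ?_⟩
    rw [mulVec2]
    funext i; fin_cases i <;> simp [h0, h1]

/-- Let `Λ = Aℤ²` be a lattice in `ℤ × ℝ` with generator matrix `A = [[a,b],[c,d]]`, where
`a, b ∈ ℤ`, `c = p/q`, `d = p'/q'` are rationals in lowest terms, and `det A = 1/2`.
Set `N = qq'/gcd(pq', p'q)`.  Then `N` is even and `Λ` possesses a uniquely determined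
generator matrix of the form `[[N/2, b'],[0, 1/N]]` with `b' ∈ ℤ`, `0 ≤ b' < N/2`. -/
theorem stmt_5 (a b p q p' q' : ℤ) (hq : 0 < q) (hq' : 0 < q')
    (hpq : Int.gcd p q = 1) (hpq' : Int.gcd p' q' = 1)
    (hdet : (a : ℝ) * ((p' : ℝ) / (q' : ℝ)) - (b : ℝ) * ((p : ℝ) / (q : ℝ)) = 1 / 2)
    (N : ℤ) (hN : N = q * q' / (Int.gcd (p * q') (p' * q) : ℤ)) :
    2 ∣ N ∧
    ∃! b' : ℤ, 0 ≤ b' ∧ 2 * b' < N ∧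
      latticePts !![(N : ℝ) / 2, (b' : ℝ); 0, 1 / (N : ℝ)]
        = latticePts !![(a : ℝ), (b : ℝ); (p : ℝ) / (q : ℝ), (p' : ℝ) / (q' : ℝ)] := by
  have hq0 : (q : ℝ) ≠ 0 := by exact_mod_cast hq.ne'
  have hq'0 : (q' : ℝ) ≠ 0 := by exact_mod_cast hq'.ne'
  have hD : 2 * (a * (p' * q) - b * (p * q')) = q * q' := by
    have h : (2 : ℝ) * (a * (p' * q) - b * (p * q')) = q * q' := by
      field_simp at hdet
      nlinarith [hdet]
    exact_mod_cast h
  have hpp' : p * q' ≠ 0 ∨ p' * q ≠ 0 := by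
    by_contra h
    push_neg at h
    obtain ⟨h1, h2⟩ := h
    have hp : p = 0 := by
      rcases mul_eq_zero.mp h1 with h | h
      · exact h
      · omega
    have hp' : p' = 0 := by
      rcases mul_eq_zero.mp h2 with h | h
      · exact h
      · omega
    rw [hp, hp'] at hdet
    norm_num at hdet
  set g : ℤ := (Int.gcd (p * q') (p' * q) : ℤ) with hgdef
  have hg : 0 < g := by
    have h : 0 < Int.gcd (p * q') (p' * q) := Int.gcd_pos_iff.mpr hpp'
    rw [hgdef]
    exact_mod_cast h
  have hgdL : g ∣ p * q' := Int.gcd_dvd_left _ _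
  have hgdR : g ∣ p' * q := Int.gcd_dvd_right _ _
  have hgD : g ∣ (a * (p' * q) - b * (p * q')) :=
    dvd_sub (hgdR.mul_left a) (hgdL.mul_left b)
  set D : ℤ := a * (p' * q) - b * (p * q') with hDdef
  set K : ℤ := D / g with hKdef
  have hKD : g * K = D := Int.mul_ediv_cancel' hgD
  have hNK : N = 2 * K := by
    rw [hN, ← hD]
    exact Int.mul_ediv_assoc 2 hgD
  have hDpos : 0 < D := by nlinarith [mul_pos hq hq']
  have hKpos : 0 < K := by nlinarith [hKD]
  have hNpos : 0 < N := by omega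
  set s : ℤ := p * q' / g with hsdef
  set t : ℤ := p' * q / g with htdef
  have hgs : g * s = p * q' := Int.mul_ediv_cancel' hgdL
  have hgt : g * t = p' * q := Int.mul_ediv_cancel' hgdR
  have hst : Int.gcd s t = 1 := by
    have h := Int.gcd_div_gcd_div_gcd (i := p * q') (j := p' * q) (Int.gcd_pos_iff.mpr hpp')
    rw [hsdef, htdef, hgdef]
    exact_mod_cast h
  have hK : a * t - b * s = K := by
    have h2 : g * (a * t - b * s) = g * K := by
      rw [hKD, hDdef, ← hgs, ← hgt]; ring
    exact mul_left_cancel₀ hg.ne' h2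
  -- Bezout
  set u : ℤ := Int.gcdA s t with hudef
  set v : ℤ := Int.gcdB s t with hvdef
  have hbez : s * u + t * v = 1 := by
    have h := Int.gcd_eq_gcd_ab s t
    rw [hst] at h
    exact_mod_cast h.symm
  -- real-number versions
  have hN0 : (N : ℝ) ≠ 0 := by exact_mod_cast hNpos.ne'
  have hgN : g * N = q * q' := by
    rw [hN]
    exact Int.mul_ediv_cancel' (by rw [← hD]; exact hgD.mul_left 2)
  have hpNqs : p * N = q * s := by
    have h : g * (p * N) = g * (q * s) := by
      calc g * (p * N) = p * (g * N) := by ring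
        _ = p * (q * q') := by rw [hgN]
        _ = q * (g * s) := by rw [hgs]; ring
        _ = g * (q * s) := by ring
    exact mul_left_cancel₀ hg.ne' h
  have hp'Nq't : p' * N = q' * t := by
    have h : g * (p' * N) = g * (q' * t) := by
      calc g * (p' * N) = p' * (g * N) := by ring
        _ = p' * (q * q') := by rw [hgN]
        _ = q' * (g * t) := by rw [hgt]; ring
        _ = g * (q' * t) := by ring
    exact mul_left_cancel₀ hg.ne' h
  have hpqs : (p : ℝ) / q = s / N := by
    rw [div_eq_div_iff hq0 hN0]
    exact_mod_cast hpNqs.trans (mul_comm q s)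
  have hp'q't : (p' : ℝ) / q' = t / N := by
    rw [div_eq_div_iff hq'0 hN0]
    exact_mod_cast hp'Nq't.trans (mul_comm q' t)
  have hKR : (a : ℝ) * t - b * s = K := by exact_mod_cast hK
  have hbezR : (s : ℝ) * u + t * v = 1 := by exact_mod_cast hbez
  have hNR : (N : ℝ) = 2 * K := by exact_mod_cast hNK
  have key : ∀ b' e : ℤ, b' = a * u + b * v + K * e →
      latticePts !![(N : ℝ) / 2, (b' : ℝ); 0, 1 / (N : ℝ)]
        = latticePts !![(a : ℝ), (b : ℝ); (p : ℝ) / (q : ℝ), (p' : ℝ) / (q' : ℝ)] := by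
    intro b' e hb'
    have hb'R : (b' : ℝ) = a * u + b * v + K * e := by exact_mod_cast hb'
    ext x
    rw [mem2, mem2]
    constructor
    · rintro ⟨m, n, h0, h1⟩
      refine ⟨m * t + n * (u + e * t), -(m * s) + n * (v - e * s), ?_, ?_⟩
      · rw [h0, hNR]
        push_cast
        linear_combination (-((m : ℝ) + n * e)) * hKR + (n : ℝ) * hb'R
      · rw [h1, hpqs, hp'q't]
        push_cast
        field_simp
        linear_combination (-(n : ℝ)) * hbezR
    · rintro ⟨m, n, h0, h1⟩
      refine ⟨m * (v - e * s) + n * (-u - e * t), m * s + n * t, ?_, ?_⟩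
      · rw [h0, hNR]
        push_cast
        linear_combination ((m : ℝ) * (v - e * s) + n * (-u - e * t) + e * (m * s + n * t)) * hKR
          - ((m : ℝ) * s + n * t) * hb'R - ((a : ℝ) * m + b * n) * hbezR
      · rw [h1, hpqs, hp'q't]
        push_cast
        field_simp
        ring
  refine ⟨⟨K, hNK⟩, ?_⟩
  set c : ℤ := a * u + b * v with hcdef
  set b0 : ℤ := c % K with hb0def
  have hb0 : b0 = c + K * (-(c / K)) := by
    rw [hb0def, Int.emod_def]; ring
  have hb0nonneg : 0 ≤ b0 := Int.emod_nonneg c hKpos.ne'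
  have hb0lt : b0 < K := Int.emod_lt_of_pos c hKpos
  refine ⟨b0, ⟨hb0nonneg, by omega, key b0 (-(c / K)) hb0⟩, ?_⟩
  rintro y ⟨hy0, hy1, hyL⟩
  have hLL : latticePts !![(N : ℝ) / 2, (y : ℝ); 0, 1 / (N : ℝ)]
      = latticePts !![(N : ℝ) / 2, (b0 : ℝ); 0, 1 / (N : ℝ)] := by
    rw [hyL, key b0 (-(c / K)) hb0]
  have hxmem : (![(y : ℝ), 1 / N] : Fin 2 → ℝ) ∈
      latticePts !![(N : ℝ) / 2, (y : ℝ); 0, 1 / (N : ℝ)] := by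
    rw [mem2]
    exact ⟨0, 1, by norm_num, by norm_num⟩
  rw [hLL, mem2] at hxmem
  obtain ⟨m, n, h0, h1⟩ := hxmem
  simp only [Matrix.cons_val_zero, Matrix.cons_val_one, Matrix.head_cons] at h0 h1
  have hn1 : (n : ℝ) = 1 := by
    field_simp at h1
    linarith [h1]
  have hn1' : n = 1 := by exact_mod_cast hn1
  subst hn1'
  have hy : (y : ℝ) = K * m + b0 := by
    rw [h0, hNR]; push_cast; ring
  have hyZ : y = K * m + b0 := by exact_mod_cast hy
  have hylt : y < K := by omega
  have h3 : K * m < K * 1 := by rw [mul_one]; linarith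
  have h4 : K * (-1) < K * m := by linarith
  have hm1 : m < 1 := lt_of_mul_lt_mul_left h3 hKpos.le
  have hm2 : -1 < m := lt_of_mul_lt_mul_left h4 hKpos.le
  have hm : m = 0 := by omega
  rw [hm, mul_zero, zero_add] at hyZ
  exact hyZ
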